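/- Let A be an n×n matrix over a commutative ring with rows u and v agreeing outside columns u,v (A_{u,w}=A_{v,w} for w∉{u,v}), u<v. Then det(A) = (−1)^{u+v}(A_{v,u} − A_{u,u})·det(A^{v;u}) + (A_{v,v} − A_{u,v})·det(A^{v;v}). -/
import Mathlib

open Matrix

lemma det_updateRow_single_aux {R : Type*} [CommRing R] {n : ℕ}
    (A : Matrix (Fin (n + 1)) (Fin (n + 1)) R) (v c : Fin (n + 1)) :
    (A.updateRow v (Pi.single c 1)).det =
      (-1 : R) ^ ((v : ℕ) + (c : ℕ)) * (A.submatrix v.succAbove c.succAbove).det := by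
  rw [Matrix.det_succ_row _ v]
  rw [Finset.sum_eq_single c]
  · have hsub : (A.updateRow v (Pi.single c 1)).submatrix v.succAbove c.succAbove
        = A.submatrix v.succAbove c.succAbove := by
      ext i j
      simp [Matrix.submatrix_apply, Matrix.updateRow_apply, (Fin.succAbove_ne v i)]
    rw [hsub]
    simp
  · intro j _ hj
    simp [Matrix.updateRow_apply, Pi.single_apply, hj.symm]
  · simp

theorem det_expand_two_agreeing_rows_v {R : Type*} [CommRing R] {n : ℕ}
    (A : Matrix (Fin (n + 1)) (Fin (n + 1)) R) (u v : Fin (n + 1)) (huv : u < v)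
    (hrow : ∀ w, w ≠ u → w ≠ v → A u w = A v w) :
    A.det = (-1 : R) ^ ((u : ℕ) + (v : ℕ)) * (A v u - A u u) *
        (A.submatrix v.succAbove u.succAbove).det
      + (A v v - A u v) * (A.submatrix v.succAbove v.succAbove).det := by
  have hne : u ≠ v := ne_of_lt huv
  have hAv : A v = A u + ((A v u - A u u) • (Pi.single u (1 : R) : Fin (n+1) → R)
      + (A v v - A u v) • (Pi.single v (1 : R) : Fin (n+1) → R)) := by
    funext w
    by_cases hw1 : w = u
    · subst hw1; simp [Pi.single_apply, hne.symm]
    · by_cases hw2 : w = v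
      · subst hw2; simp [Pi.single_apply, hne]
      · simp [Pi.single_apply, hw1, hw2, hrow w hw1 hw2]
  conv_lhs => rw [show A = A.updateRow v (A v) by simp, hAv]
  rw [Matrix.det_updateRow_add, Matrix.det_updateRow_add,
    Matrix.det_updateRow_smul, Matrix.det_updateRow_smul,
    det_updateRow_single_aux, det_updateRow_single_aux]
  have h0 : (A.updateRow v (A u)).det = 0 :=
    Matrix.det_zero_of_row_eq hne (by simp [Matrix.updateRow_apply, hne])
  rw [h0]
  have hvv : (-1 : R) ^ ((v : ℕ) + (v : ℕ)) = 1 := by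
    rw [← two_mul, pow_mul]; simp
  rw [hvv, Nat.add_comm (v : ℕ) (u : ℕ)]
  ring
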